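/- Let δ > 0 and let K ⊆ ℝ^d be a convex body containing the origin. Then the image Φ_δ(K) is convex and Φ_δ(K) ⊆ K. -/
import Mathlib


/-- For `δ > 0`, `φ_δ(r) = 2 / (1 + √(1 + 4δr²))`, the unique positive root of
`φ + δr²φ² = 1`. -/
noncomputable def phi (δ r : ℝ) : ℝ := 2 / (1 + Real.sqrt (1 + 4 * δ * r ^ 2))

/-- The map `Φ_δ : ℝ^d → ℝ^d`, `Φ_δ(x) = φ_δ(|x|) • x`. -/
noncomputable def Phi (δ : ℝ) {d : ℕ} (x : EuclideanSpace ℝ (Fin d)) :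
    EuclideanSpace ℝ (Fin d) := phi δ ‖x‖ • x

lemma phi_pos (δ r : ℝ) : 0 < phi δ r := by
  have h : 0 ≤ Real.sqrt (1 + 4 * δ * r ^ 2) := Real.sqrt_nonneg _
  unfold phi
  positivity

lemma phi_le_one (δ r : ℝ) (hδ : 0 ≤ δ) : phi δ r ≤ 1 := by
  have harg : (0:ℝ) ≤ 1 + 4 * δ * r ^ 2 := by nlinarith [sq_nonneg r]
  have h1 : (1:ℝ) ≤ Real.sqrt (1 + 4 * δ * r ^ 2) := by
    nlinarith [Real.sq_sqrt harg, Real.sqrt_nonneg (1 + 4 * δ * r ^ 2)]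
  rw [phi, div_le_one (by linarith)]
  linarith

lemma phi_root (δ r : ℝ) (hδ : 0 ≤ δ) :
    phi δ r + δ * r ^ 2 * (phi δ r) ^ 2 = 1 := by
  set s := Real.sqrt (1 + 4 * δ * r ^ 2) with hsdef
  have harg : (0:ℝ) ≤ 1 + 4 * δ * r ^ 2 := by nlinarith [sq_nonneg r]
  have hs2 : s ^ 2 = 1 + 4 * δ * r ^ 2 := Real.sq_sqrt harg
  have hs0 : 0 ≤ s := Real.sqrt_nonneg _
  have hne : (1:ℝ) + s ≠ 0 := by linarith
  rw [phi, ← hsdef]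
  field_simp
  nlinarith [hs2]

lemma phi_eq_of_root (δ r c : ℝ) (hδ : 0 ≤ δ) (hc : 0 < c)
    (h : c + δ * r ^ 2 * c ^ 2 = 1) : phi δ r = c := by
  have hp := phi_root δ r hδ
  have hpp := phi_pos δ r
  have key : (phi δ r - c) * (1 + δ * r ^ 2 * (phi δ r + c)) = 0 := by
    linear_combination hp - h
  have hpos : 0 < 1 + δ * r ^ 2 * (phi δ r + c) := by
    nlinarith [mul_nonneg (mul_nonneg hδ (sq_nonneg r)) (add_pos hpp hc).le]
  have := mul_eq_zero.mp key
  rcases this with h1 | h2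
  · linarith
  · linarith

lemma combo_mem {d : ℕ} {K : Set (EuclideanSpace ℝ (Fin d))} (hK : Convex ℝ K)
    (h0 : (0 : EuclideanSpace ℝ (Fin d)) ∈ K)
    {x y : EuclideanSpace ℝ (Fin d)} (hx : x ∈ K) (hy : y ∈ K)
    {a b : ℝ} (ha : 0 ≤ a) (hb : 0 ≤ b) (hab : a + b ≤ 1) :
    a • x + b • y ∈ K := by
  rcases eq_or_lt_of_le (by linarith : (0:ℝ) ≤ a + b) with hw | hw
  · have ha0 : a = 0 := by linarith
    have hb0 : b = 0 := by linarith
    simpa [ha0, hb0] using h0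
  · have hw' : a + b ≠ 0 := ne_of_gt hw
    have hmem : (a / (a + b)) • x + (b / (a + b)) • y ∈ K :=
      hK hx hy (by positivity) (by positivity) (by field_simp)
    have h2 := hK hmem h0 hw.le (by linarith : (0:ℝ) ≤ 1 - (a + b)) (by ring)
    rw [smul_add, smul_smul, smul_smul, smul_zero, add_zero] at h2
    have e1 : (a + b) * (a / (a + b)) = a := by field_simp
    have e2 : (a + b) * (b / (a + b)) = b := by field_simp
    rwa [e1, e2] at h2

lemma norm_Phi_sq {d : ℕ} (δ : ℝ) (hδ : 0 ≤ δ) (x : EuclideanSpace ℝ (Fin d)) :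
    δ * ‖Phi δ x‖ ^ 2 = 1 - phi δ ‖x‖ := by
  have hn : ‖Phi δ x‖ = phi δ ‖x‖ * ‖x‖ := by
    rw [Phi, norm_smul, Real.norm_eq_abs, abs_of_pos (phi_pos δ ‖x‖)]
  rw [hn]
  have := phi_root δ ‖x‖ hδ
  nlinarith [this]

/-- Let `δ > 0` and let `K ⊆ ℝ^d` be a convex body containing the origin. Then the image
`Φ_δ(K)` is convex and `Φ_δ(K) ⊆ K`. -/
theorem stmt6 (d : ℕ) (δ : ℝ) (hδ : 0 < δ) (K : Set (EuclideanSpace ℝ (Fin d)))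
    (hKcomp : IsCompact K) (hKconv : Convex ℝ K) (hKint : (interior K).Nonempty)
    (h0 : (0 : EuclideanSpace ℝ (Fin d)) ∈ K) :
    Convex ℝ (Phi δ '' K) ∧ Phi δ '' K ⊆ K := by
  constructor
  · -- convexity of the image
    rintro a ⟨x₁, hx₁, rfl⟩ b ⟨x₂, hx₂, rfl⟩ t s ht hs hts
    set A := Phi δ x₁ with hAdef
    set B := Phi δ x₂ with hBdef
    set pA := phi δ ‖x₁‖ with hpAdef
    set pB := phi δ ‖x₂‖ with hpBdef
    have hpA : 0 < pA := phi_pos δ _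
    have hpB : 0 < pB := phi_pos δ _
    have hA : δ * ‖A‖ ^ 2 = 1 - pA := norm_Phi_sq δ hδ.le x₁
    have hB : δ * ‖B‖ ^ 2 = 1 - pB := norm_Phi_sq δ hδ.le x₂
    set y := t • A + s • B with hydef
    -- convexity of squared norm
    have hn1 : ‖y‖ ≤ t * ‖A‖ + s * ‖B‖ := by
      calc ‖y‖ ≤ ‖t • A‖ + ‖s • B‖ := norm_add_le _ _
        _ = t * ‖A‖ + s * ‖B‖ := by
            rw [norm_smul, norm_smul, Real.norm_eq_abs, Real.norm_eq_abs,
              abs_of_nonneg ht, abs_of_nonneg hs]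
    have hy2 : ‖y‖ ^ 2 ≤ t * ‖A‖ ^ 2 + s * ‖B‖ ^ 2 := by
      nlinarith [sq_nonneg (‖A‖ - ‖B‖), mul_nonneg ht hs, norm_nonneg y,
        norm_nonneg A, norm_nonneg B]
    set c := 1 - δ * ‖y‖ ^ 2 with hcdef
    have hcy : δ * ‖y‖ ^ 2 ≤ t * (1 - pA) + s * (1 - pB) := by
      have := mul_le_mul_of_nonneg_left hy2 hδ.le
      nlinarith
    have hc : 0 < c := by
      have h1 : t * pA + s * pB > 0 := by
        rcases lt_or_ge 0 t with htp | htp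
        · nlinarith [mul_nonneg hs hpB.le]
        · have ht0 : t = 0 := le_antisymm htp ht
          have hs1 : s = 1 := by linarith
          rw [ht0, hs1]; simpa using hpB
      rw [hcdef]
      nlinarith
    have hcne : c ≠ 0 := ne_of_gt hc
    refine ⟨c⁻¹ • y, ?_, ?_⟩
    · -- c⁻¹ • y ∈ K
      have hArw : A = (1 - δ * ‖A‖ ^ 2) • x₁ := by
        rw [show (1 : ℝ) - δ * ‖A‖ ^ 2 = pA by linarith]
        rw [hAdef, Phi]
      have hBrw : B = (1 - δ * ‖B‖ ^ 2) • x₂ := by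
        rw [show (1 : ℝ) - δ * ‖B‖ ^ 2 = pB by linarith]
        rw [hBdef, Phi]
      have hz : c⁻¹ • y = (c⁻¹ * (t * pA)) • x₁ + (c⁻¹ * (s * pB)) • x₂ := by
        rw [hydef]
        nth_rewrite 1 [hArw, hBrw]
        rw [smul_add, smul_smul, smul_smul, smul_smul, smul_smul]
        rw [show (1 : ℝ) - δ * ‖A‖ ^ 2 = pA by linarith,
          show (1 : ℝ) - δ * ‖B‖ ^ 2 = pB by linarith, mul_assoc, mul_assoc]
      rw [hz]
      refine combo_mem hKconv h0 hx₁ hx₂ ?_ ?_ ?_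
      · positivity
      · positivity
      · rw [← mul_add]
        rw [inv_mul_le_iff₀ hc]
        nlinarith
    · -- Phi δ (c⁻¹ • y) = y
      have hnz : ‖c⁻¹ • y‖ = c⁻¹ * ‖y‖ := by
        rw [norm_smul, Real.norm_eq_abs, abs_of_pos (by positivity)]
      have hroot : c + δ * ‖c⁻¹ • y‖ ^ 2 * c ^ 2 = 1 := by
        rw [hnz]
        field_simp
        ring
      have hphi : phi δ ‖c⁻¹ • y‖ = c := phi_eq_of_root δ _ c hδ.le hc hroot
      rw [Phi, hphi, smul_smul, mul_inv_cancel₀ hcne, one_smul]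
  · -- Phi δ '' K ⊆ K
    rintro _ ⟨x, hx, rfl⟩
    have hp := phi_pos δ ‖x‖
    have hp1 := phi_le_one δ ‖x‖ hδ.le
    have := hKconv hx h0 hp.le (by linarith : (0:ℝ) ≤ 1 - phi δ ‖x‖) (by ring)
    simpa [Phi] using this
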